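/- Let σ > 0, let X ~ N(0,1) and Δ ~ N(0,σ²) be independent real Gaussian random variables, and let sign denote the sign function with sign(t)=1 if t>0, sign(t)=-1 if t<0, sign(0)=0. Then P(sign(X + Δ) ≠ sign(X)) = arctan(σ)/π. -/

import Mathlib

open MeasureTheory ProbabilityTheory Real Set Filter

namespace ProbSignFlipAux


lemma measurable_realSign : Measurable Real.sign := by
  have : Real.sign = fun r : ℝ => if r < 0 then (-1:ℝ) else if 0 < r then 1 else 0 := by
    funext r; rfl
  rw [this]
  exact Measurable.ite (measurableSet_lt measurable_id measurable_const) measurable_const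
    (Measurable.ite (measurableSet_lt measurable_const measurable_id) measurable_const
      measurable_const)

lemma gauss_prod : (gaussianReal 0 1).prod (gaussianReal 0 1)
    = volume.withDensity (fun p : ℝ × ℝ => gaussianPDF 0 1 p.1 * gaussianPDF 0 1 p.2) := by
  refine Measure.prod_eq fun s t hs ht => ?_
  rw [Measure.volume_eq_prod, withDensity_apply _ (hs.prod ht), ← Measure.prod_restrict,
    lintegral_prod_mul (measurable_gaussianPDF 0 1).aemeasurable
      (measurable_gaussianPDF 0 1).aemeasurable,
    ← gaussianReal_apply 0 one_ne_zero s, ← gaussianReal_apply 0 one_ne_zero t]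

lemma integral_r : ∫ r in Ioi (0:ℝ), r * rexp (-(1/2) * r ^ 2) = 1 := by
  have hderiv : ∀ x ∈ Ici (0:ℝ),
      HasDerivAt (fun r : ℝ => -rexp (-(1/2) * r ^ 2)) (x * rexp (-(1/2) * x ^ 2)) x := by
    intro x _
    have h1 : HasDerivAt (fun r : ℝ => -(1/2 : ℝ) * r ^ 2) (-(1/2 : ℝ) * (2 * x ^ 1)) x :=
      (hasDerivAt_pow 2 x).const_mul (-(1/2):ℝ)
    have h2 := h1.exp.fun_neg
    refine h2.congr_deriv ?_
    ring
  have hint : IntegrableOn (fun x : ℝ => x * rexp (-(1/2) * x ^ 2)) (Ioi 0) :=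
    (integrable_mul_exp_neg_mul_sq (by norm_num : (0:ℝ) < 1/2)).integrableOn
  have htend : Tendsto (fun r : ℝ => -rexp (-(1/2) * r ^ 2)) atTop (nhds 0) := by
    rw [show (0:ℝ) = -0 by ring]
    refine Tendsto.neg ?_
    refine Real.tendsto_exp_atBot.comp ?_
    have h3 : Tendsto (fun r : ℝ => r ^ 2) atTop atTop := tendsto_pow_atTop two_ne_zero
    have := h3.const_mul_atTop_of_neg (by norm_num : (-(1/2):ℝ) < 0)
    simpa using this
  have := integral_Ioi_of_hasDerivAt_of_tendsto' hderiv hint htend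
  simp at this
  simpa using this



lemma wedge1 {σ θ : ℝ} (hσ : 0 < σ) (hθ1 : -(π/2) < θ) (hθ2 : θ < π/2) :
    cos θ + σ * sin θ < 0 ↔ θ < arctan σ - π / 2 := by
  have hφ2 : arctan σ < π/2 := arctan_lt_pi_div_two σ
  have hφ1 : 0 < arctan σ := by have := Real.arctan_strictMono hσ; rwa [Real.arctan_zero] at this
  have hψmem : arctan σ - π/2 ∈ Ioo (-(π/2)) (π/2) := ⟨by linarith, by linarith⟩
  have hcos : 0 < cos θ := cos_pos_of_mem_Ioo ⟨hθ1, hθ2⟩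
  have htψ : tan (arctan σ - π/2) = -σ⁻¹ := by
    rw [show arctan σ - π/2 = -(π/2 - arctan σ) by ring, Real.tan_neg,
      Real.tan_pi_div_two_sub, tan_arctan]
  have key : cos θ + σ * sin θ < 0 ↔ tan θ < -σ⁻¹ := by
    rw [Real.tan_eq_sin_div_cos, div_lt_iff₀ hcos]
    constructor
    · intro h
      have h1 := mul_lt_mul_of_pos_left h (inv_pos.mpr hσ)
      have h2 : σ⁻¹ * σ = 1 := inv_mul_cancel₀ hσ.ne'
      nlinarith
    · intro h
      have h1 := mul_lt_mul_of_pos_left h hσ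
      have h2 : σ * σ⁻¹ = 1 := mul_inv_cancel₀ hσ.ne'
      nlinarith
  rw [key, ← htψ]
  exact (Real.strictMonoOn_tan.lt_iff_lt ⟨hθ1, hθ2⟩ hψmem)

lemma cos_pos_range {θ : ℝ} (hθ1 : -π < θ) (hθ2 : θ < π) (h : 0 < cos θ) :
    -(π/2) < θ ∧ θ < π/2 := by
  constructor
  · by_contra hc
    push_neg at hc
    have h1 : π/2 ≤ -θ := by linarith
    have h2 : -θ ≤ π + π/2 := by nlinarith [pi_pos]
    have := Real.cos_nonpos_of_pi_div_two_le_of_le h1 h2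
    rw [Real.cos_neg] at this
    linarith
  · by_contra hc
    push_neg at hc
    have := Real.cos_nonpos_of_pi_div_two_le_of_le hc (by nlinarith [pi_pos])
    linarith

lemma wedge_mem {σ : ℝ} (hσ : 0 < σ) {θ : ℝ} (hθ1 : -π < θ) (hθ2 : θ < π) :
    ((0 < cos θ ∧ cos θ + σ * sin θ < 0) ∨ (cos θ < 0 ∧ 0 < cos θ + σ * sin θ))
      ↔ θ ∈ Ioo (-(π/2)) (arctan σ - π/2) ∪ Ioo (π/2) (arctan σ + π/2) := by
  have hφ2 : arctan σ < π/2 := arctan_lt_pi_div_two σ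
  have hφ1 : 0 < arctan σ := by have := Real.arctan_strictMono hσ; rwa [Real.arctan_zero] at this
  constructor
  · rintro (⟨hc, hs⟩ | ⟨hc, hs⟩)
    · obtain ⟨h1, h2⟩ := cos_pos_range hθ1 hθ2 hc
      exact Or.inl ⟨h1, (wedge1 hσ h1 h2).mp hs⟩
    · -- cos θ < 0 and cos θ + σ sin θ > 0 : show θ ∈ (π/2, arctan σ + π/2)
      have hsin : 0 < sin θ := by nlinarith
      have hθpos : 0 < θ := by
        by_contra hc2
        push_neg at hc2
        have h := Real.sin_nonneg_of_nonneg_of_le_pi (x := -θ) (by linarith) (by linarith)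
        rw [Real.sin_neg] at h
        linarith
      have hhalf : π/2 < θ := by
        by_contra hc2
        push_neg at hc2
        have := Real.cos_nonneg_of_mem_Icc (x := θ) ⟨by linarith, hc2⟩
        linarith
      refine Or.inr ⟨hhalf, ?_⟩
      have e1 : cos (θ - π) = -cos θ := by
        rw [show θ - π = -(π - θ) by ring, Real.cos_neg, Real.cos_pi_sub]
      have e2 : sin (θ - π) = -sin θ := by
        rw [show θ - π = -(π - θ) by ring, Real.sin_neg, Real.sin_pi_sub]
      have := (wedge1 hσ (θ := θ - π) (by linarith) (by linarith)).mp
        (by rw [e1, e2]; nlinarith)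
      linarith
  · rintro (⟨h1, h2⟩ | ⟨h1, h2⟩)
    · have hc : 0 < cos θ := cos_pos_of_mem_Ioo ⟨h1, by linarith⟩
      exact Or.inl ⟨hc, (wedge1 hσ h1 (by linarith)).mpr h2⟩
    · have e1 : cos (θ - π) = -cos θ := by
        rw [show θ - π = -(π - θ) by ring, Real.cos_neg, Real.cos_pi_sub]
      have e2 : sin (θ - π) = -sin θ := by
        rw [show θ - π = -(π - θ) by ring, Real.sin_neg, Real.sin_pi_sub]
      have hc' : 0 < cos (θ - π) := cos_pos_of_mem_Ioo ⟨by linarith, by linarith⟩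
      have hs' := (wedge1 hσ (θ := θ - π) (by linarith) (by linarith)).mpr (by linarith)
      rw [e1] at hc'
      rw [e1, e2] at hs'
      exact Or.inr ⟨by linarith, by nlinarith⟩




lemma mul_pos_iff_left {a b : ℝ} (h : 0 < a) : 0 < a * b ↔ 0 < b :=
  ⟨fun hb => by nlinarith, fun hb => mul_pos h hb⟩

lemma mul_neg_iff_left {a b : ℝ} (h : 0 < a) : a * b < 0 ↔ b < 0 :=
  ⟨fun hb => by nlinarith, fun hb => mul_neg_of_pos_of_neg h hb⟩

lemma gauss_wedge {σ : ℝ} (hσ : 0 < σ) :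
    ((gaussianReal 0 1).prod (gaussianReal 0 1))
      {p : ℝ × ℝ | (0 < p.1 ∧ p.1 + σ * p.2 < 0) ∨ (p.1 < 0 ∧ 0 < p.1 + σ * p.2)}
      = ENNReal.ofReal (arctan σ / π) := by
  have hφ2 : arctan σ < π/2 := arctan_lt_pi_div_two σ
  have hφ1 : 0 < arctan σ := by
    have := Real.arctan_strictMono hσ; rwa [Real.arctan_zero] at this
  set W : Set (ℝ × ℝ) :=
    {p : ℝ × ℝ | (0 < p.1 ∧ p.1 + σ * p.2 < 0) ∨ (p.1 < 0 ∧ 0 < p.1 + σ * p.2)} with hWdef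
  set S : Set ℝ := Ioo (-(π/2)) (arctan σ - π/2) ∪ Ioo (π/2) (arctan σ + π/2) with hSdef
  have hW : MeasurableSet W := by
    apply MeasurableSet.union
    · exact (measurableSet_lt measurable_const measurable_fst).inter
        (measurableSet_lt (measurable_fst.add (measurable_snd.const_mul σ)) measurable_const)
    · exact (measurableSet_lt measurable_fst measurable_const).inter
        (measurableSet_lt measurable_const (measurable_fst.add (measurable_snd.const_mul σ)))
  have hSmeas : MeasurableSet S := measurableSet_Ioo.union measurableSet_Ioo
  have hSsub : S ⊆ Ioo (-π) π := by
    rintro x (⟨h1, h2⟩ | ⟨h1, h2⟩) <;> exact ⟨by linarith [pi_pos], by linarith [pi_pos]⟩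
  set g : ℝ × ℝ → ℝ := fun p => gaussianPDFReal 0 1 p.1 * gaussianPDFReal 0 1 p.2 with hgdef
  have hg : Integrable g (volume : Measure (ℝ × ℝ)) := by
    rw [Measure.volume_eq_prod]
    exact (integrable_gaussianPDFReal 0 1).mul_prod (integrable_gaussianPDFReal 0 1)
  rw [gauss_prod, withDensity_apply _ hW]
  have h1 : ∀ p : ℝ × ℝ, gaussianPDF 0 1 p.1 * gaussianPDF 0 1 p.2 = ENNReal.ofReal (g p) :=
    fun p => (ENNReal.ofReal_mul (gaussianPDFReal_nonneg 0 1 p.1)).symm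
  calc ∫⁻ p in W, gaussianPDF 0 1 p.1 * gaussianPDF 0 1 p.2
      = ∫⁻ p in W, ENNReal.ofReal (g p) := by simp_rw [h1]
    _ = ENNReal.ofReal (∫ p in W, g p) := by
        rw [ofReal_integral_eq_lintegral_ofReal hg.integrableOn
          (ae_of_all _ fun p => mul_nonneg (gaussianPDFReal_nonneg _ _ _)
            (gaussianPDFReal_nonneg _ _ _))]
    _ = ENNReal.ofReal (arctan σ / π) := by
        congr 1
        have hcongr : ∀ p ∈ polarCoord.target,
            p.1 • W.indicator g (polarCoord.symm p)
              = ((2*π)⁻¹ * (p.1 * rexp (-(1/2) * p.1 ^ 2)))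
                  * S.indicator (fun _ => (1:ℝ)) p.2 := by
          intro p hp
          rw [polarCoord_target] at hp
          obtain ⟨hr, hθ⟩ := hp
          simp only [mem_Ioi] at hr
          simp only [mem_Ioo] at hθ
          rw [polarCoord_symm_apply]
          have hmem : (p.1 * cos p.2, p.1 * sin p.2) ∈ W ↔ p.2 ∈ S := by
            rw [hWdef]
            simp only [mem_setOf_eq]
            have expand : p.1 * cos p.2 + σ * (p.1 * sin p.2)
                = p.1 * (cos p.2 + σ * sin p.2) := by ring
            rw [expand, mul_pos_iff_left hr, mul_neg_iff_left hr, mul_pos_iff_left hr,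
              mul_neg_iff_left hr]
            exact wedge_mem hσ hθ.1 hθ.2
          by_cases hS : p.2 ∈ S
          · rw [indicator_of_mem (hmem.mpr hS) g, indicator_of_mem hS]
            have hval : g (p.1 * cos p.2, p.1 * sin p.2)
                = (2*π)⁻¹ * rexp (-(1/2) * p.1 ^ 2) := by
              rw [hgdef]
              simp only [gaussianPDFReal, NNReal.coe_one, mul_one, sub_zero]
              rw [mul_mul_mul_comm, ← mul_inv, Real.mul_self_sqrt (by positivity),
                ← Real.exp_add]
              have hexp : -(p.1 * cos p.2) ^ 2 / 2 + -(p.1 * sin p.2) ^ 2 / 2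
                  = -(1/2) * p.1 ^ 2 := by
                linear_combination (-(p.1 ^ 2) / 2) * Real.sin_sq_add_cos_sq p.2
              rw [hexp]
            rw [hval, smul_eq_mul]
            ring
          · rw [indicator_of_notMem (fun h => hS (hmem.mp h)), indicator_of_notMem hS]
            simp
        rw [← integral_indicator hW, ← integral_comp_polarCoord_symm (W.indicator g),
          setIntegral_congr_fun polarCoord.open_target.measurableSet hcongr,
          polarCoord_target, Measure.volume_eq_prod,
          setIntegral_prod_mul (fun r : ℝ => (2*π)⁻¹ * (r * rexp (-(1/2) * r ^ 2)))
            (fun θ : ℝ => S.indicator (fun _ => (1:ℝ)) θ)]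
        rw [integral_const_mul, integral_r, setIntegral_indicator hSmeas,
          inter_eq_self_of_subset_right hSsub, setIntegral_const]
        have hdisj : Disjoint (Ioo (-(π/2)) (arctan σ - π/2)) (Ioo (π/2) (arctan σ + π/2)) := by
          rw [Set.disjoint_left]
          rintro x ⟨_, h2⟩ ⟨h3, _⟩
          linarith
        have hvol : (volume S).toReal = 2 * arctan σ := by
          rw [hSdef, measure_union hdisj measurableSet_Ioo, Real.volume_Ioo, Real.volume_Ioo,
            ← ENNReal.ofReal_add (by linarith) (by linarith)]
          rw [ENNReal.toReal_ofReal (by linarith)]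
          ring
        rw [measureReal_def, hvol, smul_eq_mul, mul_one]
        field_simp

end ProbSignFlipAux

open ProbSignFlipAux

/-- If `X ~ N(0,1)` and `Δ ~ N(0,σ²)` are independent (with `σ > 0`), then the probability
that the binarized activation flips under the perturbation `Δ`, i.e.
`P(sign(X + Δ) ≠ sign X)`, equals `arctan σ / π`.  Here `Real.sign t` is `1` if `t > 0`,
`-1` if `t < 0` and `0` if `t = 0`. -/
theorem prob_sign_flip
    {Ω : Type*} [MeasurableSpace Ω] (μ : Measure Ω) [IsProbabilityMeasure μ]
    (σ : ℝ) (hσ : 0 < σ) (X Δ : Ω → ℝ)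
    (hX : Measure.map X μ = gaussianReal 0 1)
    (hΔ : Measure.map Δ μ = gaussianReal 0 ⟨σ ^ 2, sq_nonneg σ⟩)
    (hXΔ : IndepFun X Δ μ) :
    μ {ω | Real.sign (X ω + Δ ω) ≠ Real.sign (X ω)}
      = ENNReal.ofReal (Real.arctan σ / Real.pi) := by
  have hx : AEMeasurable X μ := by
    by_contra h
    rw [Measure.map_of_not_aemeasurable h] at hX
    exact (IsProbabilityMeasure.ne_zero (gaussianReal 0 1)) hX.symm
  have hd : AEMeasurable Δ μ := by
    by_contra h
    rw [Measure.map_of_not_aemeasurable h] at hΔ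
    haveI := instIsProbabilityMeasureGaussianReal 0 ⟨σ ^ 2, sq_nonneg σ⟩
    exact (IsProbabilityMeasure.ne_zero (gaussianReal 0 ⟨σ ^ 2, sq_nonneg σ⟩)) hΔ.symm
  have hAmeas : MeasurableSet {p : ℝ × ℝ | Real.sign (p.1 + p.2) ≠ Real.sign p.1} :=
    (measurableSet_eq_fun (measurable_realSign.comp (measurable_fst.add measurable_snd))
      (measurable_realSign.comp measurable_fst)).compl
  have hmap := (ProbabilityTheory.indepFun_iff_map_prod_eq_prod_map_map hx hd).mp hXΔ
  rw [hX, hΔ] at hmap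
  have hev : {ω | Real.sign (X ω + Δ ω) ≠ Real.sign (X ω)}
      = (fun ω => (X ω, Δ ω)) ⁻¹' {p : ℝ × ℝ | Real.sign (p.1 + p.2) ≠ Real.sign p.1} := rfl
  rw [hev, ← Measure.map_apply_of_aemeasurable (hx.prodMk hd) hAmeas, hmap]
  have hσmap : gaussianReal 0 ⟨σ ^ 2, sq_nonneg σ⟩ = (gaussianReal 0 1).map (σ * ·) := by
    rw [gaussianReal_map_const_mul, mul_zero, mul_one]
    congr 1
  have hpm := Measure.map_prod_map (gaussianReal 0 1) (gaussianReal 0 1) measurable_id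
    (measurable_id.const_mul σ)
  rw [Measure.map_id] at hpm
  simp only [id_eq] at hpm
  rw [hσmap, hpm, Measure.map_apply
    (show Measurable (Prod.map (id : ℝ → ℝ) fun x : ℝ => σ * x) from
      measurable_id.prodMap (show Measurable fun x : ℝ => σ * x from measurable_id.const_mul σ))
    hAmeas]
  have hpre : Prod.map id (σ * ·) ⁻¹' {p : ℝ × ℝ | Real.sign (p.1 + p.2) ≠ Real.sign p.1}
      = {p : ℝ × ℝ | Real.sign (p.1 + σ * p.2) ≠ Real.sign p.1} := rfl
  rw [hpre]
  set G2 := (gaussianReal 0 1).prod (gaussianReal 0 1) with hG2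
  have hnull1 : G2 {p : ℝ × ℝ | p.1 = 0} = 0 := by
    have he : {p : ℝ × ℝ | p.1 = 0} = ({0} : Set ℝ) ×ˢ (univ : Set ℝ) := by
      ext p
      simp only [mem_setOf_eq, mem_prod, mem_singleton_iff, mem_univ, and_true]
    rw [hG2, he, Measure.prod_prod]
    rw [(gaussianReal_absolutelyContinuous 0 one_ne_zero) Real.volume_singleton]
    simp
  have hnull2 : G2 {p : ℝ × ℝ | p.1 + σ * p.2 = 0} = 0 := by
    have hms : MeasurableSet {p : ℝ × ℝ | p.1 + σ * p.2 = 0} :=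
      measurableSet_eq_fun (measurable_fst.add (measurable_snd.const_mul σ)) measurable_const
    rw [hG2, Measure.prod_apply hms]
    have hsl : ∀ x : ℝ, (Prod.mk x ⁻¹' {p : ℝ × ℝ | p.1 + σ * p.2 = 0}) = {-(x/σ)} := by
      intro x; ext y
      simp only [mem_preimage, mem_setOf_eq, mem_singleton_iff]
      constructor
      · intro h
        field_simp
        linarith
      · intro h
        rw [h]
        field_simp
        ring
    simp_rw [hsl]
    have h0 : ∀ x : ℝ, gaussianReal 0 1 {-(x/σ)} = 0 :=
      fun x => (gaussianReal_absolutelyContinuous 0 one_ne_zero) Real.volume_singleton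
    simp [h0]
  have haeeq : {p : ℝ × ℝ | Real.sign (p.1 + σ * p.2) ≠ Real.sign p.1}
      =ᵐ[G2] {p : ℝ × ℝ | (0 < p.1 ∧ p.1 + σ * p.2 < 0) ∨ (p.1 < 0 ∧ 0 < p.1 + σ * p.2)} := by
    rw [MeasureTheory.ae_eq_set]
    constructor
    · refine measure_mono_null ?_
        (measure_union_null hnull1 hnull2 :
          G2 ({p : ℝ × ℝ | p.1 = 0} ∪ {p : ℝ × ℝ | p.1 + σ * p.2 = 0}) = 0)
      rintro ⟨x, y⟩ ⟨hne, hnW⟩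
      simp only [mem_setOf_eq] at hne hnW
      by_contra hN
      simp only [mem_union, mem_setOf_eq] at hN
      push_neg at hN
      obtain ⟨hx0, hs0⟩ := hN
      push_neg at hnW
      rcases hx0.lt_or_gt with hx1 | hx1 <;> rcases hs0.lt_or_gt with hs1 | hs1
      · exact hne (by rw [Real.sign_of_neg hs1, Real.sign_of_neg hx1])
      · exact (hnW.2 hx1).not_gt hs1
      · exact (hnW.1 hx1).not_gt hs1
      · exact hne (by rw [Real.sign_of_pos hs1, Real.sign_of_pos hx1])
    · have hempty : {p : ℝ × ℝ | (0 < p.1 ∧ p.1 + σ * p.2 < 0) ∨ (p.1 < 0 ∧ 0 < p.1 + σ * p.2)}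
          \ {p : ℝ × ℝ | Real.sign (p.1 + σ * p.2) ≠ Real.sign p.1} = ∅ := by
        ext p
        simp only [mem_diff, mem_setOf_eq, mem_empty_iff_false, iff_false, not_and, not_not]
        rintro (⟨hx1, hs1⟩ | ⟨hx1, hs1⟩) heq
        · rw [Real.sign_of_neg hs1, Real.sign_of_pos hx1] at heq
          norm_num at heq
        · rw [Real.sign_of_pos hs1, Real.sign_of_neg hx1] at heq
          norm_num at heq
      rw [hempty]
      simp
  rw [measure_congr haeeq]
  exact gauss_wedge hσ
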